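/- arXiv:2102.05332 — 2 statements merged into one kernel-verified Lean document; each statement's English description precedes it below -/
import Mathlib

section
/- Let γ > 0, μ > 0, and let C₀, C_{γ,0}, C_{μ,0} > 0 and 0 < T_f < ∞ be given. Then there exists a constant C̃ = C̃(γ, μ, C₀, C_{γ,0}, C_{μ,0}, T_f) > 0 with the following property: for every 0 < ε < 1, if φ : [0, T_f] → ℓ² is a solution of the cubic DNLS equation and ψ : [0, T_f] → ℓ² is a solution of the AL lattice whose initial data satisfy ‖φ(0) − ψ(0)‖_{ℓ²} ≤ C₀ ε³, ‖φ(0)‖_{ℓ²} ≤ C_{γ,0} ε, and P_μ(ψ(0)) ≤ C_{μ,0} ε², then the maximal distance between individual units satisfies ‖φ(t) − ψ(t)‖_{ℓ∞} = sup_{n∈ℤ} |φ_n(t) − ψ_n(t)| ≤ C̃ ε³ for every t ∈ [0, T_f]. -/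
open Set

noncomputable section

/-- The Hilbert space ℓ² of square-summable sequences of complex numbers indexed by ℤ. -/
abbrev l2 : Type := lp (fun _ : ℤ => ℂ) 2

/-- `φ : I → ℓ²` is a solution of the cubic DNLS equation
`i φ̇ₙ + (φₙ₊₁ + φₙ₋₁) + γ|φₙ|²φₙ = 0` on the set `s`, with derivative curve `φ'`:
it is continuously differentiable and satisfies the equation componentwise. -/
def IsDNLSSol (γ : ℝ) (s : Set ℝ) (φ φ' : ℝ → l2) : Prop :=
  (∀ t ∈ s, HasDerivWithinAt φ (φ' t) s t) ∧ ContinuousOn φ' s ∧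
    ∀ t ∈ s, ∀ n : ℤ,
      Complex.I * (φ' t) n + ((φ t) (n + 1) + (φ t) (n - 1))
        + (γ * ‖(φ t) n‖ ^ 2 : ℝ) * (φ t) n = 0

/-- `ψ : I → ℓ²` is a solution of the Ablowitz–Ladik lattice
`i ψ̇ₙ + (ψₙ₊₁ + ψₙ₋₁) + μ|ψₙ|²(ψₙ₊₁ + ψₙ₋₁) = 0` on the set `s`, with derivative curve `ψ'`:
it is continuously differentiable and satisfies the equation componentwise. -/
def IsALSol (μ : ℝ) (s : Set ℝ) (ψ ψ' : ℝ → l2) : Prop :=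
  (∀ t ∈ s, HasDerivWithinAt ψ (ψ' t) s t) ∧ ContinuousOn ψ' s ∧
    ∀ t ∈ s, ∀ n : ℤ,
      Complex.I * (ψ' t) n + ((ψ t) (n + 1) + (ψ t) (n - 1))
        + (μ * ‖(ψ t) n‖ ^ 2 : ℝ) * ((ψ t) (n + 1) + (ψ t) (n - 1)) = 0

/-- The deformed power `P_μ(ψ) = Σₙ ln(1 + μ|ψₙ|²)`. -/
def Pdef (μ : ℝ) (ψ : l2) : ℝ := ∑' n : ℤ, Real.log (1 + μ * ‖ψ n‖ ^ 2)

lemma l2_hasSum_norm (f : l2) : HasSum (fun n => ‖f n‖ ^ 2) (‖f‖ ^ 2) := by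
  have := lp.hasSum_norm (p := 2) (by norm_num) f
  simpa [Real.rpow_natCast] using this

lemma l2_summable_sq (f : l2) : Summable (fun n => ‖f n‖ ^ 2) := (l2_hasSum_norm f).summable

/-- evaluation as a continuous linear map -/
def evalCLM (n : ℤ) : l2 →L[ℂ] ℂ :=
  LinearMap.mkContinuous
    { toFun := fun f => f n
      map_add' := fun f g => congrFun (lp.coeFn_add f g) n
      map_smul' := fun c f => congrFun (lp.coeFn_smul c f) n } 1
    (fun f => by simpa using lp.norm_apply_le_norm (by norm_num) f n)

@[simp] lemma evalCLM_apply (n : ℤ) (f : l2) : evalCLM n f = f n := rfl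

lemma norm_le_of_componentwise {f g : l2} (h : ∀ n, ‖f n‖ ≤ ‖g n‖) : ‖f‖ ≤ ‖g‖ := by
  have h1 := l2_hasSum_norm f
  have h2 := l2_hasSum_norm g
  have : ‖f‖ ^ 2 ≤ ‖g‖ ^ 2 :=
    hasSum_le (fun n => by
      have := h n
      nlinarith [norm_nonneg (f n), norm_nonneg (g n)]) h1 h2
  nlinarith [norm_nonneg f, norm_nonneg g]

lemma memℓp_shift (f : l2) (k : ℤ) : Memℓp (fun n => f (n + k)) 2 := by
  apply memℓp_gen
  have hs : Summable (fun n => ‖f n‖ ^ 2) := l2_summable_sq f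
  have : Summable (fun n => ‖f ((Equiv.addRight k) n)‖ ^ 2) :=
    ((Equiv.addRight k).summable_iff (f := fun n => ‖f n‖ ^ 2)).2 hs
  simpa [Real.rpow_natCast] using this

def shiftL (k : ℤ) (f : l2) : l2 := ⟨fun n => f (n + k), memℓp_shift f k⟩

@[simp] lemma shiftL_apply (k : ℤ) (f : l2) (n : ℤ) : shiftL k f n = f (n + k) := rfl


set_option maxHeartbeats 1000000 in
lemma norm_shiftL (k : ℤ) (f : l2) : ‖shiftL k f‖ = ‖f‖ := by
  have h1 := l2_hasSum_norm (shiftL k f)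
  have h2 := l2_hasSum_norm f
  have h3 : HasSum (fun n => ‖f (n + k)‖ ^ 2) (‖f‖ ^ 2) :=
    ((Equiv.addRight k).hasSum_iff).2 h2
  simp only [shiftL_apply] at h1
  have h4 : ‖shiftL k f‖ ^ 2 = ‖f‖ ^ 2 := h1.unique h3
  nlinarith [norm_nonneg (shiftL k f), norm_nonneg f]

section calc1
variable {s : Set ℝ} {t : ℝ}

lemma hasDerivWithinAt_apply {φ v : ℝ → l2} (h : HasDerivWithinAt φ (v t) s t) (n : ℤ) :
    HasDerivWithinAt (fun u => φ u n) (v t n) s t := by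
  have := (((evalCLM n).restrictScalars ℝ).hasFDerivAt (x := φ t)).comp_hasDerivWithinAt t h
  exact this

lemma l2_continuousOn_apply {φ : ℝ → l2} (h : ContinuousOn φ s) (n : ℤ) :
    ContinuousOn (fun u => φ u n) s :=
  ((evalCLM n).continuous.comp_continuousOn h)

lemma hasDeriv_normSq {f g : ℝ → ℂ} (h : HasDerivWithinAt f (g t) s t) :
    HasDerivWithinAt (fun u => ‖f u‖ ^ 2)
      (2 * ((starRingEnd ℂ) (f t) * g t).re) s t := by
  have hre : HasDerivWithinAt (fun u => (f u).re) ((g t).re) s t := by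
    exact (Complex.reCLM.hasFDerivAt (x := f t)).comp_hasDerivWithinAt t h
  have him : HasDerivWithinAt (fun u => (f u).im) ((g t).im) s t := by
    exact (Complex.imCLM.hasFDerivAt (x := f t)).comp_hasDerivWithinAt t h
  have key : HasDerivWithinAt (fun u => (f u).re * (f u).re + (f u).im * (f u).im)
      ((g t).re * (f t).re + (f t).re * (g t).re + ((g t).im * (f t).im + (f t).im * (g t).im)) s t :=
    (hre.mul hre).add (him.mul him)
  have hfun : (fun u => ‖f u‖ ^ 2) = (fun u => (f u).re * (f u).re + (f u).im * (f u).im) := by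
    funext u
    rw [← Complex.normSq_eq_norm_sq, Complex.normSq_apply]
  rw [hfun]
  convert key using 1
  simp [Complex.mul_re]
  ring
end calc1

lemma telescope_sum (f : ℤ → ℝ) (N : ℕ) :
    ∑ n ∈ Finset.Icc (-(N:ℤ)) (N:ℤ), (f n - f (n-1)) = f (N:ℤ) - f (-(N:ℤ)-1) := by
  induction N with
  | zero => norm_num
  | succ N ih =>
    have hset : Finset.Icc (-((N+1:ℕ)):ℤ) ((N+1:ℕ):ℤ) =
        insert (-(N:ℤ)-1) (insert ((N:ℤ)+1) (Finset.Icc (-(N:ℤ)) (N:ℤ))) := by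
      ext x
      simp only [Finset.mem_Icc, Finset.mem_insert]
      push_cast
      omega
    have h1 : ((N:ℤ)+1) ∉ Finset.Icc (-(N:ℤ)) (N:ℤ) := by simp [Finset.mem_Icc]
    have h2 : (-(N:ℤ)-1) ∉ insert ((N:ℤ)+1) (Finset.Icc (-(N:ℤ)) (N:ℤ)) := by
      simp [Finset.mem_Icc]; omega
    rw [hset, Finset.sum_insert h2, Finset.sum_insert h1, ih]
    have e1 : (N:ℤ) + 1 - 1 = (N:ℤ) := by ring
    have e2 : (-(N:ℤ)-1) - 1 = -((N+1:ℕ):ℤ) - 1 := by push_cast; ring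
    have e3 : ((N+1:ℕ):ℤ) = (N:ℤ) + 1 := by push_cast; ring
    rw [e1, e2, e3]
    ring

open Filter MeasureTheory Topology in
lemma conservation {Tf : ℝ} (g a : ℤ → ℝ → ℝ)
    (hgd : ∀ n, ∀ u ∈ Icc 0 Tf, HasDerivWithinAt (g n) (a n u - a (n-1) u) (Icc 0 Tf) u)
    (hac : ∀ n, ContinuousOn (a n) (Icc 0 Tf))
    (M : ℝ) (hbound : ∀ n : ℤ, ∀ u ∈ Icc 0 Tf, |a n u| ≤ M)
    (hdecay : ∀ u ∈ Icc 0 Tf, Tendsto (fun n : ℤ => a n u) cofinite (𝓝 0))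
    (hsum : ∀ u ∈ Icc 0 Tf, Summable (fun n => g n u)) :
    ∀ t ∈ Icc 0 Tf, ∑' n, g n t = ∑' n, g n 0 := by
  intro t ht
  have h0 : (0:ℝ) ∈ Icc 0 Tf := ⟨le_refl 0, ht.1.trans ht.2⟩
  set S : ℕ → ℝ → ℝ := fun N u => ∑ n ∈ Finset.Icc (-(N:ℤ)) (N:ℤ), g n u with hS
  set h : ℕ → ℝ → ℝ := fun N u => a (N:ℤ) u - a (-(N:ℤ)-1) u with hh
  -- derivative of partial sums
  have hSd : ∀ N, ∀ u ∈ Icc 0 Tf, HasDerivWithinAt (S N) (h N u) (Icc 0 Tf) u := by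
    intro N u hu
    have := HasDerivWithinAt.fun_sum (u := Finset.Icc (-(N:ℤ)) (N:ℤ))
      (fun n _ => hgd n u hu)
    rwa [telescope_sum (fun n => a n u) N] at this
  -- continuity of partial sums
  have hSc : ∀ N, ContinuousOn (S N) (Icc 0 Tf) := fun N u hu =>
    (hSd N u hu).continuousWithinAt
  -- FTC on [0, t]
  have hIcc : Icc 0 t ⊆ Icc 0 Tf := Icc_subset_Icc le_rfl ht.2
  have hFTC : ∀ N, ∫ y in (0:ℝ)..t, h N y = S N t - S N 0 := by
    intro N
    apply intervalIntegral.integral_eq_sub_of_hasDeriv_right_of_le ht.1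
      ((hSc N).mono hIcc)
    · intro x hx
      have hmem : Icc 0 Tf ∈ nhdsWithin x (Ioi x) := by
        apply mem_of_superset (Ioc_mem_nhdsGT_of_mem ⟨le_refl x, lt_of_lt_of_le hx.2 ht.2⟩)
        exact fun y hy => ⟨(hx.1.trans hy.1).le, hy.2⟩
      exact (hSd N x (hIcc ⟨hx.1.le, hx.2.le⟩)).mono_of_mem_nhdsWithin hmem
    · apply ContinuousOn.intervalIntegrable
      rw [uIcc_of_le ht.1]
      exact (((hac (N:ℤ)).sub (hac (-(N:ℤ)-1))).mono hIcc)
  -- the integrals tend to 0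
  have hint : Tendsto (fun N => ∫ y in (0:ℝ)..t, h N y) atTop (𝓝 (∫ y in (0:ℝ)..t, (0:ℝ))) := by
    apply intervalIntegral.tendsto_integral_filter_of_dominated_convergence
      (fun _ => 2 * M)
    · apply Eventually.of_forall
      intro N
      apply ContinuousOn.aestronglyMeasurable _ measurableSet_uIoc
      have : uIoc (0:ℝ) t ⊆ Icc 0 Tf := by
        rw [uIoc_of_le ht.1]
        exact fun y hy => ⟨hy.1.le, hy.2.trans ht.2⟩
      exact (((hac (N:ℤ)).sub (hac (-(N:ℤ)-1))).mono this)
    · apply Eventually.of_forall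
      intro N
      apply Eventually.of_forall
      intro x hx
      have hx' : x ∈ Icc 0 Tf := by
        rw [uIoc_of_le ht.1] at hx
        exact ⟨hx.1.le, hx.2.trans ht.2⟩
      have b1 := hbound (N:ℤ) x hx'
      have b2 := hbound (-(N:ℤ)-1) x hx'
      have : |h N x| ≤ 2 * M := by
        rw [hh]
        have := abs_sub (a (N:ℤ) x) (a (-(N:ℤ)-1) x)
        calc |a (N:ℤ) x - a (-(N:ℤ)-1) x| ≤ |a (N:ℤ) x| + |a (-(N:ℤ)-1) x| := abs_sub _ _
          _ ≤ 2 * M := by linarith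
      simpa using this
    · exact intervalIntegrable_const
    · apply Eventually.of_forall
      intro x hx
      have hx' : x ∈ Icc 0 Tf := by
        rw [uIoc_of_le ht.1] at hx
        exact ⟨hx.1.le, hx.2.trans ht.2⟩
      have hd := hdecay x hx'
      have inj1 : Function.Injective (fun N : ℕ => (N:ℤ)) := fun a b hab => by simp only at hab; omega
      have inj2 : Function.Injective (fun N : ℕ => -(N:ℤ)-1) := fun a b hab => by simp only at hab; omega
      have t1 : Tendsto (fun N : ℕ => a (N:ℤ) x) atTop (𝓝 0) := by
        rw [← Nat.cofinite_eq_atTop]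
        exact hd.comp inj1.tendsto_cofinite
      have t2 : Tendsto (fun N : ℕ => a (-(N:ℤ)-1) x) atTop (𝓝 0) := by
        rw [← Nat.cofinite_eq_atTop]
        exact hd.comp inj2.tendsto_cofinite
      simpa using t1.sub t2
  rw [intervalIntegral.integral_const] at hint
  simp only [smul_zero] at hint
  -- partial sums tend to the tsums
  have hfin : Tendsto (fun N : ℕ => Finset.Icc (-(N:ℤ)) (N:ℤ)) atTop atTop := by
    apply tendsto_atTop_finset_of_monotone
    · intro m n hmn
      apply Finset.Icc_subset_Icc <;> omega
    · intro x
      exact ⟨x.natAbs, by rw [Finset.mem_Icc]; omega⟩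
  have hTt : Tendsto (fun N => S N t) atTop (𝓝 (∑' n, g n t)) :=
    ((hsum t ht).hasSum).comp hfin
  have hT0 : Tendsto (fun N => S N 0) atTop (𝓝 (∑' n, g n 0)) :=
    ((hsum 0 h0).hasSum).comp hfin
  have hdiff : Tendsto (fun N => S N t - S N 0) atTop (𝓝 (∑' n, g n t - ∑' n, g n 0)) :=
    hTt.sub hT0
  have hzero : Tendsto (fun N => S N t - S N 0) atTop (𝓝 0) := by
    apply hint.congr
    intro N
    exact hFTC N
  have := tendsto_nhds_unique hdiff hzero
  linarith

lemma solve_d {X d : ℂ} (h : Complex.I * d + X = 0) : d = Complex.I * X := by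
  linear_combination (-Complex.I) * h + d * Complex.I_sq

lemma dnls_id (z wp wm d : ℂ) (r : ℝ) (h : Complex.I * d + (wp + wm) + (r:ℂ) * z = 0) :
    2 * ((starRingEnd ℂ) z * d).re
      = 2 * (Complex.I * ((starRingEnd ℂ) z) * wp).re
        - 2 * (Complex.I * ((starRingEnd ℂ) wm) * z).re := by
  have h' : Complex.I * d + ((wp + wm) + (r:ℂ) * z) = 0 := by linear_combination h
  have hd := solve_d h'
  subst hd
  simp only [Complex.mul_re, Complex.mul_im, Complex.add_re, Complex.add_im,
    Complex.I_re, Complex.I_im, Complex.conj_re, Complex.conj_im,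
    Complex.ofReal_re, Complex.ofReal_im]
  ring

lemma al_id (z wp wm d : ℂ) (r : ℝ) (h : Complex.I * d + (wp + wm) + (r:ℂ) * (wp + wm) = 0) :
    2 * ((starRingEnd ℂ) z * d).re
      = (1 + r) * (2 * (Complex.I * ((starRingEnd ℂ) z) * wp).re
        - 2 * (Complex.I * ((starRingEnd ℂ) wm) * z).re) := by
  have h' : Complex.I * d + ((wp + wm) + (r:ℂ) * (wp + wm)) = 0 := by linear_combination h
  have hd := solve_d h'
  subst hd
  simp only [Complex.mul_re, Complex.mul_im, Complex.add_re, Complex.add_im,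
    Complex.I_re, Complex.I_im, Complex.conj_re, Complex.conj_im,
    Complex.ofReal_re, Complex.ofReal_im]
  ring

open Filter Topology in
lemma tendsto_component_cofinite (f : l2) : Tendsto (fun n => ‖f n‖) cofinite (𝓝 0) := by
  have h := (l2_summable_sq f).tendsto_cofinite_zero
  have h2 := (Real.continuous_sqrt.tendsto 0).comp h
  simp only [Function.comp_def] at h2
  have : (fun n : ℤ => Real.sqrt (‖f n‖ ^ 2)) = fun n => ‖f n‖ := by
    funext n; exact Real.sqrt_sq (norm_nonneg _)
  rwa [this, Real.sqrt_zero] at h2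

section cons
variable {Tf : ℝ}

open Filter Topology in
lemma aux_continuousOn_a {φ : ℝ → l2} (hφc : ContinuousOn φ (Icc 0 Tf)) (c : ℝ) (n : ℤ) :
    ContinuousOn (fun u => c * (Complex.I * (starRingEnd ℂ) (φ u n) * φ u (n+1)).re)
      (Icc 0 Tf) := by
  apply ContinuousOn.const_smul (c := c)
  apply Complex.continuous_re.comp_continuousOn
  exact ((continuousOn_const.mul
      (continuous_star.comp_continuousOn (l2_continuousOn_apply hφc n))).mul
    (l2_continuousOn_apply hφc (n+1)))

lemma aux_abs_a (c : ℝ) (z w : ℂ) : |c * (Complex.I * (starRingEnd ℂ) z * w).re| ≤ |c| * (‖z‖ * ‖w‖) := by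
  rw [abs_mul]
  apply mul_le_mul_of_nonneg_left _ (abs_nonneg c)
  calc |(Complex.I * (starRingEnd ℂ) z * w).re| ≤ ‖Complex.I * (starRingEnd ℂ) z * w‖ :=
        Complex.abs_re_le_norm _
    _ = ‖z‖ * ‖w‖ := by simp [norm_mul]

open Filter Topology in
lemma dnls_norm_conserved {γ : ℝ} {φ φ' : ℝ → l2} (h : IsDNLSSol γ (Icc 0 Tf) φ φ') :
    ∀ t ∈ Icc 0 Tf, ‖φ t‖ = ‖φ 0‖ := by
  obtain ⟨hder, hc', heq⟩ := h
  have hφc : ContinuousOn φ (Icc 0 Tf) := fun u hu => (hder u hu).continuousWithinAt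
  intro t ht
  obtain ⟨C, hC⟩ := isCompact_Icc.exists_bound_of_continuousOn hφc
  have key := conservation (fun n u => ‖φ u n‖ ^ 2)
    (fun n u => 2 * (Complex.I * (starRingEnd ℂ) (φ u n) * φ u (n+1)).re)
    ?_ (fun n => aux_continuousOn_a hφc 2 n) (2 * (C * C)) ?_ ?_
    (fun u _ => l2_summable_sq (φ u)) t ht
  · -- conclude norm equality
    have e1 := (l2_hasSum_norm (φ t)).tsum_eq
    have e2 := (l2_hasSum_norm (φ 0)).tsum_eq
    have : ‖φ t‖ ^ 2 = ‖φ 0‖ ^ 2 := by rw [← e1, ← e2]; exact key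
    nlinarith [norm_nonneg (φ t), norm_nonneg (φ 0)]
  · -- derivative
    intro n u hu
    have hcomp := hasDerivWithinAt_apply (v := φ') (hder u hu) n
    have hsq := hasDeriv_normSq (f := fun v => φ v n) (g := fun v => φ' v n) hcomp
    have hid := dnls_id (φ u n) (φ u (n+1)) (φ u (n-1)) (φ' u n) (γ * ‖φ u n‖ ^ 2)
      (heq u hu n)
    have hnm : n - 1 + 1 = n := by ring
    rw [hid] at hsq
    beta_reduce
    rw [hnm]
    exact hsq
  · -- bound
    intro n u hu
    have b1 := lp.norm_apply_le_norm (by norm_num : (2:ENNReal) ≠ 0) (φ u) n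
    have b2 := lp.norm_apply_le_norm (by norm_num : (2:ENNReal) ≠ 0) (φ u) (n+1)
    have hCu := hC u hu
    calc |2 * (Complex.I * (starRingEnd ℂ) (φ u n) * φ u (n+1)).re|
        ≤ |(2:ℝ)| * (‖φ u n‖ * ‖φ u (n+1)‖) := aux_abs_a 2 _ _
      _ ≤ 2 * (C * C) := by
          rw [abs_two]
          have h0 := norm_nonneg (φ u n)
          have h1 := norm_nonneg (φ u (n+1))
          nlinarith
  · -- decay
    intro u hu
    apply squeeze_zero_norm (a := fun n => 2 * C * ‖φ u n‖)
    · intro n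
      have b2 := lp.norm_apply_le_norm (by norm_num : (2:ENNReal) ≠ 0) (φ u) (n+1)
      have hCu := hC u hu
      calc ‖2 * (Complex.I * (starRingEnd ℂ) (φ u n) * φ u (n+1)).re‖
          = |2 * (Complex.I * (starRingEnd ℂ) (φ u n) * φ u (n+1)).re| := rfl
        _ ≤ |(2:ℝ)| * (‖φ u n‖ * ‖φ u (n+1)‖) := aux_abs_a 2 _ _
        _ ≤ 2 * C * ‖φ u n‖ := by
            rw [abs_two]
            have h0 := norm_nonneg (φ u n)
            have h1 := norm_nonneg (φ u (n+1))
            nlinarith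
    · have := (tendsto_component_cofinite (φ u)).const_mul (2 * C)
      simpa using this
end cons

lemma summable_log_term (μ : ℝ) (hμ : 0 < μ) (f : l2) :
    Summable (fun n : ℤ => Real.log (1 + μ * ‖f n‖ ^ 2)) := by
  apply Summable.of_nonneg_of_le
  · intro n
    apply Real.log_nonneg
    nlinarith [sq_nonneg ‖f n‖, norm_nonneg (f n)]
  · intro n
    calc Real.log (1 + μ * ‖f n‖ ^ 2) ≤ (1 + μ * ‖f n‖ ^ 2) - 1 :=
          Real.log_le_sub_one_of_pos (by nlinarith [sq_nonneg ‖f n‖])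
      _ = μ * ‖f n‖ ^ 2 := by ring
  · exact (l2_summable_sq f).mul_left μ

open Filter Topology in
lemma al_Pdef_conserved {Tf μ : ℝ} (hμ : 0 < μ) {ψ ψ' : ℝ → l2}
    (h : IsALSol μ (Icc 0 Tf) ψ ψ') :
    ∀ t ∈ Icc 0 Tf, Pdef μ (ψ t) = Pdef μ (ψ 0) := by
  obtain ⟨hder, hc', heq⟩ := h
  have hψc : ContinuousOn ψ (Icc 0 Tf) := fun u hu => (hder u hu).continuousWithinAt
  intro t ht
  obtain ⟨C, hC⟩ := isCompact_Icc.exists_bound_of_continuousOn hψc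
  have key := conservation (fun n u => Real.log (1 + μ * ‖ψ u n‖ ^ 2))
    (fun n u => (2 * μ) * (Complex.I * (starRingEnd ℂ) (ψ u n) * ψ u (n+1)).re)
    ?_ (fun n => aux_continuousOn_a hψc (2 * μ) n) (|2 * μ| * (C * C)) ?_ ?_
    (fun u _ => summable_log_term μ hμ (ψ u)) t ht
  · exact key
  · -- derivative
    intro n u hu
    have hcomp := hasDerivWithinAt_apply (v := ψ') (hder u hu) n
    have hsq := hasDeriv_normSq (f := fun v => ψ v n) (g := fun v => ψ' v n) hcomp
    have hpos : (0:ℝ) < 1 + μ * ‖ψ u n‖ ^ 2 := by nlinarith [sq_nonneg ‖ψ u n‖]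
    have hv : HasDerivWithinAt (fun v => 1 + μ * ‖ψ v n‖ ^ 2)
        (μ * (2 * ((starRingEnd ℂ) (ψ u n) * ψ' u n).re)) (Icc 0 Tf) u :=
      (hsq.const_mul μ).const_add 1
    have hlog := hv.log (ne_of_gt hpos)
    have hid := al_id (ψ u n) (ψ u (n+1)) (ψ u (n-1)) (ψ' u n) (μ * ‖ψ u n‖ ^ 2)
      (heq u hu n)
    have hval : μ * (2 * ((starRingEnd ℂ) (ψ u n) * ψ' u n).re) / (1 + μ * ‖ψ u n‖ ^ 2)
        = (2 * μ) * (Complex.I * (starRingEnd ℂ) (ψ u n) * ψ u (n+1)).re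
          - (2 * μ) * (Complex.I * (starRingEnd ℂ) (ψ u (n-1)) * ψ u n).re := by
      rw [hid]
      field_simp
    rw [hval] at hlog
    beta_reduce
    have hnm : n - 1 + 1 = n := by ring
    rw [hnm]
    exact hlog
  · -- bound
    intro n u hu
    have hCu := hC u hu
    calc |(2 * μ) * (Complex.I * (starRingEnd ℂ) (ψ u n) * ψ u (n+1)).re|
        ≤ |2 * μ| * (‖ψ u n‖ * ‖ψ u (n+1)‖) := aux_abs_a (2*μ) _ _
      _ ≤ |2 * μ| * (C * C) := by
          have b1 := lp.norm_apply_le_norm (by norm_num : (2:ENNReal) ≠ 0) (ψ u) n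
          have b2 := lp.norm_apply_le_norm (by norm_num : (2:ENNReal) ≠ 0) (ψ u) (n+1)
          have h0 := norm_nonneg (ψ u n)
          have h1 := norm_nonneg (ψ u (n+1))
          have h2 := abs_nonneg (2*μ)
          have b1' := b1.trans hCu
          have b2' := b2.trans hCu
          nlinarith [mul_le_mul_of_nonneg_left (mul_le_mul b1' b2' h1 (h0.trans b1')) h2]
  · -- decay
    intro u hu
    apply squeeze_zero_norm (a := fun n => |2 * μ| * C * ‖ψ u n‖)
    · intro n
      have b2 := lp.norm_apply_le_norm (by norm_num : (2:ENNReal) ≠ 0) (ψ u) (n+1)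
      have hCu := hC u hu
      calc ‖(2 * μ) * (Complex.I * (starRingEnd ℂ) (ψ u n) * ψ u (n+1)).re‖
          = |(2 * μ) * (Complex.I * (starRingEnd ℂ) (ψ u n) * ψ u (n+1)).re| := rfl
        _ ≤ |2 * μ| * (‖ψ u n‖ * ‖ψ u (n+1)‖) := aux_abs_a (2*μ) _ _
        _ ≤ |2 * μ| * C * ‖ψ u n‖ := by
            have h0 := norm_nonneg (ψ u n)
            have h1 := norm_nonneg (ψ u (n+1))
            have h2 := abs_nonneg (2*μ)
            nlinarith [mul_le_mul_of_nonneg_left (mul_le_mul_of_nonneg_left (b2.trans hCu) h0) h2]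
    · have := (tendsto_component_cofinite (ψ u)).const_mul (|2 * μ| * C)
      simpa using this

lemma memℓp_of_le {f : ℤ → ℂ} {g : l2} {c : ℝ} (h : ∀ n, ‖f n‖ ≤ c * ‖g n‖) :
    Memℓp f 2 := by
  apply memℓp_gen
  have : Summable (fun n => c ^ 2 * ‖g n‖ ^ 2) := (l2_summable_sq g).mul_left (c ^ 2)
  have hs : Summable (fun n : ℤ => ‖f n‖ ^ 2) := by
    apply Summable.of_nonneg_of_le (fun n => by positivity) _ this
    intro n
    have := h n
    nlinarith [norm_nonneg (f n), norm_nonneg (g n), mul_nonneg (norm_nonneg (f n)) (norm_nonneg (g n))]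
  simpa [Real.rpow_natCast] using hs

lemma l2mk_norm_le {f : ℤ → ℂ} {g : l2} {c : ℝ} (hc : 0 ≤ c) (h : ∀ n, ‖f n‖ ≤ c * ‖g n‖) :
    ‖(⟨f, memℓp_of_le h⟩ : l2)‖ ≤ c * ‖g‖ := by
  have h2 : ∀ n, ‖(⟨f, memℓp_of_le h⟩ : l2) n‖ ≤ ‖((c:ℂ) • g) n‖ := by
    intro n
    rw [lp.coeFn_smul, Pi.smul_apply, norm_smul]
    simpa [abs_of_nonneg hc] using h n
  calc ‖(⟨f, memℓp_of_le h⟩ : l2)‖ ≤ ‖(c:ℂ) • g‖ := norm_le_of_componentwise h2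
    _ = c * ‖g‖ := by rw [norm_smul]; simp [abs_of_nonneg hc]

lemma chi_norm_bound {γ μ : ℝ} (hγ : 0 < γ) (hμ : 0 < μ) (p dp q dq : l2)
    (heqp : ∀ n : ℤ, Complex.I * dp n + (p (n + 1) + p (n - 1))
        + (γ * ‖p n‖ ^ 2 : ℝ) * p n = 0)
    (heqq : ∀ n : ℤ, Complex.I * dq n + (q (n + 1) + q (n - 1))
        + (μ * ‖q n‖ ^ 2 : ℝ) * (q (n + 1) + q (n - 1)) = 0) :
    ‖dp - dq‖ ≤ 2 * ‖p - q‖ + γ * ‖p‖ ^ 3 + 2 * μ * ‖q‖ ^ 3 := by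
  set δ : l2 := p - q with hδ
  -- nonlinear pieces
  have hFp : ∀ n : ℤ, ‖Complex.I * (((γ * ‖p n‖ ^ 2 : ℝ) : ℂ) * p n)‖ ≤ (γ * ‖p‖ ^ 2) * ‖p n‖ := by
    intro n
    have hb := lp.norm_apply_le_norm (by norm_num : (2:ENNReal) ≠ 0) p n
    rw [norm_mul, norm_mul, Complex.norm_I, one_mul, Complex.norm_real]
    rw [Real.norm_eq_abs, abs_of_nonneg (by positivity)]
    have h0 := norm_nonneg (p n)
    have hsq2 : ‖p n‖ ^ 2 ≤ ‖p‖ ^ 2 := by nlinarith [norm_nonneg p]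
    nlinarith [mul_le_mul_of_nonneg_left (mul_le_mul_of_nonneg_right hsq2 h0) hγ.le]
  have hFq : ∀ n : ℤ, ‖Complex.I * (((μ * ‖q n‖ ^ 2 : ℝ) : ℂ) * (q (n+1) + q (n-1)))‖
      ≤ (μ * ‖q‖ ^ 2) * ‖(shiftL 1 q + shiftL (-1) q) n‖ := by
    intro n
    have hb := lp.norm_apply_le_norm (by norm_num : (2:ENNReal) ≠ 0) q n
    have hco : (shiftL 1 q + shiftL (-1) q) n = q (n+1) + q (n-1) := by
      rw [lp.coeFn_add, Pi.add_apply, shiftL_apply, shiftL_apply]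
      norm_num
      rw [sub_eq_add_neg]
    rw [hco, norm_mul, norm_mul, Complex.norm_I, one_mul, Complex.norm_real]
    rw [Real.norm_eq_abs, abs_of_nonneg (by positivity)]
    have h0 := norm_nonneg (q (n+1) + q (n-1))
    have h1 := norm_nonneg (q n)
    have hsq2 : ‖q n‖ ^ 2 ≤ ‖q‖ ^ 2 := by nlinarith [norm_nonneg q]
    nlinarith [mul_le_mul_of_nonneg_left (mul_le_mul_of_nonneg_right hsq2 h0) hμ.le]
  set Fp : l2 := ⟨fun n => Complex.I * (((γ * ‖p n‖ ^ 2 : ℝ) : ℂ) * p n), memℓp_of_le hFp⟩ with hFpdef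
  set Fq : l2 := ⟨fun n => Complex.I * (((μ * ‖q n‖ ^ 2 : ℝ) : ℂ) * (q (n+1) + q (n-1))),
    memℓp_of_le hFq⟩ with hFqdef
  -- decomposition
  have hdec : dp - dq = (Complex.I • shiftL 1 δ) + (Complex.I • shiftL (-1) δ) + Fp - Fq := by
    apply lp.ext
    funext n
    rw [lp.coeFn_sub, Pi.sub_apply, lp.coeFn_sub, Pi.sub_apply, lp.coeFn_add, Pi.add_apply,
      lp.coeFn_add, Pi.add_apply, lp.coeFn_smul, Pi.smul_apply, lp.coeFn_smul, Pi.smul_apply]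
    have h1 := heqp n
    have h2 := heqq n
    have hδ1 : (shiftL 1 δ) n = p (n+1) - q (n+1) := by
      rw [shiftL_apply, hδ, lp.coeFn_sub, Pi.sub_apply]
    have hδ2 : (shiftL (-1) δ) n = p (n-1) - q (n-1) := by
      have e : n + -1 = n - 1 := by ring
      rw [shiftL_apply, e, hδ, lp.coeFn_sub, Pi.sub_apply]
    rw [hδ1, hδ2, hFpdef, hFqdef]
    simp only [smul_eq_mul]
    linear_combination (-Complex.I) * h1 + Complex.I * h2
      + (dp n - dq n) * Complex.I_sq
  rw [hdec]
  have hnp : ‖Fp‖ ≤ (γ * ‖p‖ ^ 2) * ‖p‖ := l2mk_norm_le (by positivity) hFp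
  have hnq : ‖Fq‖ ≤ (μ * ‖q‖ ^ 2) * ‖shiftL 1 q + shiftL (-1) q‖ := l2mk_norm_le (by positivity) hFq
  have hsq : ‖shiftL 1 q + shiftL (-1) q‖ ≤ 2 * ‖q‖ := by
    calc ‖shiftL 1 q + shiftL (-1) q‖ ≤ ‖shiftL 1 q‖ + ‖shiftL (-1) q‖ := norm_add_le _ _
      _ = 2 * ‖q‖ := by rw [norm_shiftL, norm_shiftL]; ring
  have hA : ‖Complex.I • shiftL 1 δ‖ = ‖δ‖ := by
    rw [norm_smul, Complex.norm_I, one_mul, norm_shiftL]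
  have hB : ‖Complex.I • shiftL (-1) δ‖ = ‖δ‖ := by
    rw [norm_smul, Complex.norm_I, one_mul, norm_shiftL]
  have hq0 := norm_nonneg q
  have hq2 : ‖Fq‖ ≤ 2 * μ * ‖q‖ ^ 3 := by
    nlinarith [mul_le_mul_of_nonneg_left hsq (by positivity : (0:ℝ) ≤ μ * ‖q‖ ^ 2)]
  calc ‖(Complex.I • shiftL 1 δ) + (Complex.I • shiftL (-1) δ) + Fp - Fq‖
      ≤ ‖(Complex.I • shiftL 1 δ) + (Complex.I • shiftL (-1) δ) + Fp‖ + ‖Fq‖ := norm_sub_le _ _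
    _ ≤ ‖(Complex.I • shiftL 1 δ) + (Complex.I • shiftL (-1) δ)‖ + ‖Fp‖ + ‖Fq‖ := by
        have := norm_add_le ((Complex.I • shiftL 1 δ) + (Complex.I • shiftL (-1) δ)) Fp
        linarith
    _ ≤ ‖Complex.I • shiftL 1 δ‖ + ‖Complex.I • shiftL (-1) δ‖ + ‖Fp‖ + ‖Fq‖ := by
        have := norm_add_le (Complex.I • shiftL 1 δ) (Complex.I • shiftL (-1) δ)
        linarith
    _ ≤ 2 * ‖p - q‖ + γ * ‖p‖ ^ 3 + 2 * μ * ‖q‖ ^ 3 := by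
        rw [hA, hB]
        have hp3 : (γ * ‖p‖ ^ 2) * ‖p‖ = γ * ‖p‖ ^ 3 := by ring
        rw [hp3] at hnp
        simp only [hδ]
        linarith

lemma Pdef_nonneg (μ : ℝ) (hμ : 0 < μ) (f : l2) : 0 ≤ Pdef μ f :=
  tsum_nonneg (fun n => Real.log_nonneg (by nlinarith [sq_nonneg ‖f n‖]))

lemma mu_norm_sq_le_Pdef (μ : ℝ) (hμ : 0 < μ) (f : l2) :
    μ * ‖f‖ ^ 2 ≤ Pdef μ f * Real.exp (Pdef μ f) := by
  set P := Pdef μ f with hP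
  have hgsum := summable_log_term μ hμ f
  have hgnn : ∀ n : ℤ, 0 ≤ Real.log (1 + μ * ‖f n‖ ^ 2) :=
    fun n => Real.log_nonneg (by nlinarith [sq_nonneg ‖f n‖])
  have hterm : ∀ n : ℤ, μ * ‖f n‖ ^ 2 ≤ Real.log (1 + μ * ‖f n‖ ^ 2) * Real.exp P := by
    intro n
    set y := Real.log (1 + μ * ‖f n‖ ^ 2) with hy
    have hpos : (0:ℝ) < 1 + μ * ‖f n‖ ^ 2 := by nlinarith [sq_nonneg ‖f n‖]
    have hexp : Real.exp y = 1 + μ * ‖f n‖ ^ 2 := Real.exp_log hpos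
    have hyP : y ≤ P := Summable.le_tsum hgsum n (fun m _ => hgnn m)
    have hy0 : 0 ≤ y := hgnn n
    -- exp y - 1 ≤ y * exp y
    have key : Real.exp y - 1 ≤ y * Real.exp y := by
      have h1 : (-y + 1) * Real.exp y ≤ Real.exp (-y) * Real.exp y :=
        mul_le_mul_of_nonneg_right (Real.add_one_le_exp (-y)) (Real.exp_pos y).le
      rw [← Real.exp_add] at h1
      simp only [neg_add_cancel, Real.exp_zero] at h1
      nlinarith
    have hmono : y * Real.exp y ≤ y * Real.exp P :=
      mul_le_mul_of_nonneg_left (Real.exp_le_exp.2 hyP) hy0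
    nlinarith
  have lhs : HasSum (fun n : ℤ => μ * ‖f n‖ ^ 2) (μ * ‖f‖ ^ 2) := (l2_hasSum_norm f).mul_left μ
  have := Summable.tsum_le_tsum hterm lhs.summable (hgsum.mul_right (Real.exp P))
  rw [lhs.tsum_eq, tsum_mul_right] at this
  exact this

set_option maxHeartbeats 1000000 in
open Filter Topology in
theorem closeness_l2 (γ μ C₀ Cγ₀ Cμ₀ Tf : ℝ) (hγ : 0 < γ) (hμ : 0 < μ)
    (hC₀ : 0 < C₀) (hCγ₀ : 0 < Cγ₀) (hCμ₀ : 0 < Cμ₀) (hTf : 0 < Tf) :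
    ∃ Ctil : ℝ, 0 < Ctil ∧
      ∀ ε : ℝ, 0 < ε → ε < 1 →
        ∀ φ φ' ψ ψ' : ℝ → l2,
          IsDNLSSol γ (Icc 0 Tf) φ φ' →
          IsALSol μ (Icc 0 Tf) ψ ψ' →
          ‖φ 0 - ψ 0‖ ≤ C₀ * ε ^ 3 →
          ‖φ 0‖ ≤ Cγ₀ * ε →
          Pdef μ (ψ 0) ≤ Cμ₀ * ε ^ 2 →
          ∀ t ∈ Icc 0 Tf, ‖φ t - ψ t‖ ≤ Ctil * ε ^ 3 := by
  set Cψ := Real.sqrt (Cμ₀ * Real.exp Cμ₀ / μ) with hCψ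
  have hCψpos : 0 < Cψ := Real.sqrt_pos.2 (by positivity)
  set K := γ * Cγ₀ ^ 3 + 2 * μ * Cψ ^ 3 with hK
  have hKpos : 0 < K := by positivity
  refine ⟨(C₀ + K) * Real.exp (2 * Tf), by positivity, ?_⟩
  intro ε hε hε1 φ φ' ψ ψ' hφs hψs hinit hφ0 hψ0
  obtain ⟨hφd, hφc', hφe⟩ := hφs
  obtain ⟨hψd, hψc', hψe⟩ := hψs
  have h0mem : (0:ℝ) ∈ Icc 0 Tf := ⟨le_refl 0, hTf.le⟩
  -- a priori bounds
  have hφn : ∀ u ∈ Icc 0 Tf, ‖φ u‖ ≤ Cγ₀ * ε := by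
    intro u hu
    rw [dnls_norm_conserved ⟨hφd, hφc', hφe⟩ u hu]
    exact hφ0
  have hψn : ∀ u ∈ Icc 0 Tf, ‖ψ u‖ ≤ Cψ * ε := by
    intro u hu
    have hPu : Pdef μ (ψ u) = Pdef μ (ψ 0) := al_Pdef_conserved hμ ⟨hψd, hψc', hψe⟩ u hu
    have hPle : Pdef μ (ψ u) ≤ Cμ₀ * ε ^ 2 := by rw [hPu]; exact hψ0
    have hP0 : 0 ≤ Pdef μ (ψ u) := Pdef_nonneg μ hμ (ψ u)
    have hmain := mu_norm_sq_le_Pdef μ hμ (ψ u)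
    have hε2 : ε ^ 2 ≤ 1 := by nlinarith
    have hexple : Real.exp (Pdef μ (ψ u)) ≤ Real.exp Cμ₀ := by
      apply Real.exp_le_exp.2
      nlinarith
    have h1 : μ * ‖ψ u‖ ^ 2 ≤ (Cμ₀ * ε ^ 2) * Real.exp Cμ₀ := by
      calc μ * ‖ψ u‖ ^ 2 ≤ Pdef μ (ψ u) * Real.exp (Pdef μ (ψ u)) := hmain
        _ ≤ (Cμ₀ * ε ^ 2) * Real.exp Cμ₀ := by
            apply mul_le_mul hPle hexple (Real.exp_pos _).le (by positivity)
    have h2 : ‖ψ u‖ ^ 2 ≤ (Cψ * ε) ^ 2 := by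
      have hCψsq : Cψ ^ 2 = Cμ₀ * Real.exp Cμ₀ / μ := Real.sq_sqrt (by positivity)
      rw [mul_pow, hCψsq]
      rw [div_mul_eq_mul_div, le_div_iff₀ hμ]
      nlinarith
    have h3 := norm_nonneg (ψ u)
    have h4 : 0 ≤ Cψ * ε := by positivity
    nlinarith
  -- Gronwall
  intro t ht
  have hgron := norm_le_gronwallBound_of_norm_deriv_right_le
    (f := fun u => φ u - ψ u) (f' := fun u => φ' u - ψ' u)
    (δ := C₀ * ε ^ 3) (K := 2) (ε := K * ε ^ 3) (a := 0) (b := Tf)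
    ?_ ?_ hinit ?_ t ht
  · -- convert gronwallBound to the explicit constant
    have hKne : (2:ℝ) ≠ 0 := two_ne_zero
    rw [gronwallBound_of_K_ne_0 hKne] at hgron
    simp only [sub_zero] at hgron
    have hexp : Real.exp (2 * t) ≤ Real.exp (2 * Tf) :=
      Real.exp_le_exp.2 (by linarith [ht.2])
    have hexppos := Real.exp_pos (2 * t)
    have hε3 : 0 < ε ^ 3 := by positivity
    calc ‖φ t - ψ t‖ ≤ C₀ * ε ^ 3 * Real.exp (2 * t)
          + K * ε ^ 3 / 2 * (Real.exp (2 * t) - 1) := hgron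
      _ ≤ (C₀ + K) * Real.exp (2 * Tf) * ε ^ 3 := by
          nlinarith [mul_le_mul_of_nonneg_left hexp (by positivity : (0:ℝ) ≤ C₀ * ε ^ 3),
            mul_le_mul_of_nonneg_left hexp (by positivity : (0:ℝ) ≤ K * ε ^ 3 / 2),
            Real.exp_pos (2 * Tf), hε3, hKpos, mul_pos hKpos hε3,
            mul_pos (mul_pos hKpos hε3) (Real.exp_pos (2 * Tf))]
  · -- continuity
    intro u hu
    exact ((hφd u hu).sub (hψd u hu)).continuousWithinAt
  · -- derivative within Ici
    intro x hx
    have hx' : x ∈ Icc 0 Tf := ⟨hx.1, hx.2.le⟩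
    have hmem : Icc 0 Tf ∈ nhdsWithin x (Ici x) := by
      apply mem_of_superset (Icc_mem_nhdsGE_of_mem ⟨le_refl x, hx.2⟩)
      exact fun y hy => ⟨hx.1.trans hy.1, hy.2⟩
    exact (((hφd x hx').sub (hψd x hx')).mono_of_mem_nhdsWithin hmem)
  · -- the bound on the derivative
    intro x hx
    have hx' : x ∈ Icc 0 Tf := ⟨hx.1, hx.2.le⟩
    have hchi := chi_norm_bound hγ hμ (φ x) (φ' x) (ψ x) (ψ' x) (hφe x hx') (hψe x hx')
    have hb1 : γ * ‖φ x‖ ^ 3 ≤ γ * Cγ₀ ^ 3 * ε ^ 3 := by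
      have := pow_le_pow_left₀ (norm_nonneg (φ x)) (hφn x hx') 3
      rw [mul_pow] at this
      nlinarith
    have hb2 : 2 * μ * ‖ψ x‖ ^ 3 ≤ 2 * μ * Cψ ^ 3 * ε ^ 3 := by
      have := pow_le_pow_left₀ (norm_nonneg (ψ x)) (hψn x hx') 3
      rw [mul_pow] at this
      nlinarith
    calc ‖φ' x - ψ' x‖ ≤ 2 * ‖φ x - ψ x‖ + γ * ‖φ x‖ ^ 3 + 2 * μ * ‖ψ x‖ ^ 3 := hchi
      _ ≤ 2 * ‖φ x - ψ x‖ + K * ε ^ 3 := by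
          have hKe : K * ε ^ 3 = γ * Cγ₀ ^ 3 * ε ^ 3 + 2 * μ * Cψ ^ 3 * ε ^ 3 := by
            rw [hK]; ring
          linarith

/-- Closeness of solutions of the cubic DNLS and the AL lattice in the `ℓ∞` metric:
under the same smallness hypotheses on the initial data, the maximal distance between
individual units satisfies `sup_n |φₙ(t) − ψₙ(t)| ≤ C̃ε³` on `[0, T_f]`. -/
theorem closeness_linfty (γ μ C₀ Cγ₀ Cμ₀ Tf : ℝ) (hγ : 0 < γ) (hμ : 0 < μ)
    (hC₀ : 0 < C₀) (hCγ₀ : 0 < Cγ₀) (hCμ₀ : 0 < Cμ₀) (hTf : 0 < Tf) :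
    ∃ Ctil : ℝ, 0 < Ctil ∧
      ∀ ε : ℝ, 0 < ε → ε < 1 →
        ∀ φ φ' ψ ψ' : ℝ → l2,
          IsDNLSSol γ (Icc 0 Tf) φ φ' →
          IsALSol μ (Icc 0 Tf) ψ ψ' →
          ‖φ 0 - ψ 0‖ ≤ C₀ * ε ^ 3 →
          ‖φ 0‖ ≤ Cγ₀ * ε →
          Pdef μ (ψ 0) ≤ Cμ₀ * ε ^ 2 →
          ∀ t ∈ Icc 0 Tf, (⨆ n : ℤ, ‖(φ t) n - (ψ t) n‖) ≤ Ctil * ε ^ 3 := by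
  obtain ⟨Ctil, hCtil, hmain⟩ := closeness_l2 γ μ C₀ Cγ₀ Cμ₀ Tf hγ hμ hC₀ hCγ₀ hCμ₀ hTf
  refine ⟨Ctil, hCtil, ?_⟩
  intro ε hε hε1 φ φ' ψ ψ' hφs hψs h1 h2 h3 t ht
  have hl2 := hmain ε hε hε1 φ φ' ψ ψ' hφs hψs h1 h2 h3 t ht
  apply ciSup_le
  intro n
  have hco : (φ t) n - (ψ t) n = (φ t - ψ t) n := by rw [lp.coeFn_sub, Pi.sub_apply]
  rw [hco]
  exact (lp.norm_apply_le_norm (by norm_num : (2:ENNReal) ≠ 0) (φ t - ψ t) n).trans hl2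
end
end

section
/- Let γ > 0. For every φ₀ ∈ ℓ², the cubic DNLS equation with initial condition φ(0) = φ₀ possesses a unique global solution: there is exactly one continuously differentiable curve φ : [0, ∞) → ℓ² with φ(0) = φ₀ that satisfies i φ̇_n + (φ_{n+1} + φ_{n−1}) + γ|φ_n|²φ_n = 0 for all n ∈ ℤ and all t ≥ 0. -/
open Set

noncomputable section

namespace DNLSaux

lemma two_toReal : (2 : ENNReal).toReal = 2 := by norm_num

lemma sum_sq_le (x : l2) (s : Finset ℤ) : ∑ i ∈ s, ‖x i‖ ^ (2:ℝ) ≤ ‖x‖ ^ (2:ℝ) := by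
  simpa [two_toReal] using lp.sum_rpow_le_norm_rpow (p := 2) (by norm_num) x s

/-- componentwise domination gives membership in ℓ². -/
lemma memℓp_of_le {f : ℤ → ℂ} {g : l2} {C : ℝ} (hC : 0 ≤ C)
    (h : ∀ n, ‖f n‖ ≤ C * ‖g n‖) : Memℓp f 2 := by
  apply memℓp_gen' (C := C ^ (2:ℝ) * ‖g‖ ^ (2:ℝ))
  intro s
  calc ∑ i ∈ s, ‖f i‖ ^ (2:ENNReal).toReal
      ≤ ∑ i ∈ s, C ^ (2:ℝ) * ‖g i‖ ^ (2:ℝ) := by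
        refine Finset.sum_le_sum fun i _ => ?_
        rw [two_toReal, ← Real.mul_rpow hC (norm_nonneg _)]
        exact Real.rpow_le_rpow (norm_nonneg _) (h i) (by norm_num)
    _ = C ^ (2:ℝ) * ∑ i ∈ s, ‖g i‖ ^ (2:ℝ) := by rw [Finset.mul_sum]
    _ ≤ C ^ (2:ℝ) * ‖g‖ ^ (2:ℝ) := by
        refine mul_le_mul_of_nonneg_left (sum_sq_le g s) ?_
        positivity

/-- componentwise domination gives a norm bound. -/
lemma norm_le_of_le {f g : l2} {C : ℝ} (hC : 0 ≤ C)
    (h : ∀ n, ‖f n‖ ≤ C * ‖g n‖) : ‖f‖ ≤ C * ‖g‖ := by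
  refine lp.norm_le_of_forall_sum_le (by norm_num) (by positivity) fun s => ?_
  calc ∑ i ∈ s, ‖f i‖ ^ (2:ENNReal).toReal
      ≤ ∑ i ∈ s, C ^ (2:ℝ) * ‖g i‖ ^ (2:ℝ) := by
        refine Finset.sum_le_sum fun i _ => ?_
        rw [two_toReal, ← Real.mul_rpow hC (norm_nonneg _)]
        exact Real.rpow_le_rpow (norm_nonneg _) (h i) (by norm_num)
    _ = C ^ (2:ℝ) * ∑ i ∈ s, ‖g i‖ ^ (2:ℝ) := by rw [Finset.mul_sum]
    _ ≤ C ^ (2:ℝ) * ‖g‖ ^ (2:ℝ) := by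
        refine mul_le_mul_of_nonneg_left (sum_sq_le g s) ?_
        positivity
    _ = (C * ‖g‖) ^ (2:ENNReal).toReal := by
        rw [two_toReal, ← Real.mul_rpow hC (norm_nonneg _)]

lemma norm_apply_le (x : l2) (n : ℤ) : ‖x n‖ ≤ ‖x‖ :=
  lp.norm_apply_le_norm (by norm_num) x n


/-- shift memℓp -/
lemma memℓp_shift (x : l2) (c : ℤ) : Memℓp (fun n => x (n + c)) 2 := by
  apply memℓp_gen' (C := ‖x‖ ^ (2:ℝ))
  intro s
  have : ∑ i ∈ s, ‖x (i + c)‖ ^ (2:ENNReal).toReal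
      = ∑ j ∈ s.map (addRightEmbedding c), ‖x j‖ ^ (2:ℝ) := by
    rw [Finset.sum_map]
    simp [two_toReal, addRightEmbedding]
  rw [this]
  exact sum_sq_le x _

def shift (c : ℤ) (x : l2) : l2 := ⟨fun n => x (n + c), memℓp_shift x c⟩

@[simp] lemma shift_apply (c : ℤ) (x : l2) (n : ℤ) : shift c x n = x (n + c) := rfl

lemma norm_shift_sub_le (c : ℤ) (x y : l2) : ‖shift c x - shift c y‖ ≤ ‖x - y‖ := by
  refine lp.norm_le_of_forall_sum_le (by norm_num) (norm_nonneg _) fun s => ?_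
  have h1 : ∀ i, ‖(shift c x - shift c y) i‖ = ‖(x - y) (i + c)‖ := by
    intro i
    simp [lp.coeFn_sub, shift]
    rfl
  calc ∑ i ∈ s, ‖(shift c x - shift c y) i‖ ^ (2:ENNReal).toReal
      = ∑ j ∈ s.map (addRightEmbedding c), ‖(x - y) j‖ ^ (2:ℝ) := by
        rw [Finset.sum_map]
        simp only [two_toReal, addRightEmbedding, Function.Embedding.coeFn_mk, h1]
    _ ≤ ‖x - y‖ ^ (2:ENNReal).toReal := by rw [two_toReal]; exact sum_sq_le _ _


lemma shift_zero (c : ℤ) : shift c (0 : l2) = 0 := by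
  apply lp.ext
  funext n
  simp [shift, lp.coeFn_zero]

lemma norm_shift_le (c : ℤ) (x : l2) : ‖shift c x‖ ≤ ‖x‖ := by
  simpa [shift_zero] using norm_shift_sub_le c x 0

lemma cubic_diff {R : ℝ} {a b : ℂ} (ha : ‖a‖ ≤ R) (hb : ‖b‖ ≤ R) :
    ‖((‖a‖ ^ 2 : ℝ) : ℂ) * a - ((‖b‖ ^ 2 : ℝ) : ℂ) * b‖ ≤ 3 * R ^ 2 * ‖a - b‖ := by
  have key : ((‖a‖ ^ 2 : ℝ) : ℂ) * a - ((‖b‖ ^ 2 : ℝ) : ℂ) * b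
      = ((‖a‖ ^ 2 : ℝ) : ℂ) * (a - b) + (((‖a‖ ^ 2 - ‖b‖ ^ 2 : ℝ)) : ℂ) * b := by
    push_cast; ring
  rw [key]
  have h0 : 0 ≤ ‖a‖ := norm_nonneg a
  have h0' : 0 ≤ ‖b‖ := norm_nonneg b
  have habs : |‖a‖ - ‖b‖| ≤ ‖a - b‖ := abs_norm_sub_norm_le a b
  have h2 : |‖a‖ ^ 2 - ‖b‖ ^ 2| ≤ (‖a‖ + ‖b‖) * ‖a - b‖ := by
    have : ‖a‖ ^ 2 - ‖b‖ ^ 2 = (‖a‖ + ‖b‖) * (‖a‖ - ‖b‖) := by ring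
    rw [this, abs_mul, abs_of_nonneg (by positivity)]
    exact mul_le_mul_of_nonneg_left habs (by positivity)
  have t1 : ‖((‖a‖ ^ 2 : ℝ) : ℂ) * (a - b)‖ ≤ R ^ 2 * ‖a - b‖ := by
    rw [norm_mul, Complex.norm_real, Real.norm_eq_abs, abs_of_nonneg (by positivity)]
    have : ‖a‖ ^ 2 ≤ R ^ 2 := by nlinarith
    exact mul_le_mul_of_nonneg_right this (norm_nonneg _)
  have t2 : ‖(((‖a‖ ^ 2 - ‖b‖ ^ 2 : ℝ)) : ℂ) * b‖ ≤ 2 * R ^ 2 * ‖a - b‖ := by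
    rw [norm_mul, Complex.norm_real, Real.norm_eq_abs]
    calc |‖a‖ ^ 2 - ‖b‖ ^ 2| * ‖b‖ ≤ ((‖a‖ + ‖b‖) * ‖a - b‖) * ‖b‖ :=
          mul_le_mul_of_nonneg_right h2 h0'
      _ ≤ 2 * R ^ 2 * ‖a - b‖ := by
          nlinarith [norm_nonneg (a - b), mul_le_mul_of_nonneg_right
            (mul_le_mul (show ‖a‖ + ‖b‖ ≤ 2 * R by linarith) hb h0' (by linarith))
            (norm_nonneg (a - b))]
  calc ‖((‖a‖ ^ 2 : ℝ) : ℂ) * (a - b) + (((‖a‖ ^ 2 - ‖b‖ ^ 2 : ℝ)) : ℂ) * b‖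
      ≤ ‖((‖a‖ ^ 2 : ℝ) : ℂ) * (a - b)‖ + ‖(((‖a‖ ^ 2 - ‖b‖ ^ 2 : ℝ)) : ℂ) * b‖ :=
        norm_add_le _ _
    _ ≤ 3 * R ^ 2 * ‖a - b‖ := by linarith

variable (γ : ℝ)

lemma memℓp_N (hγ : 0 ≤ γ) (x : l2) :
    Memℓp (fun n => ((γ * ‖x n‖ ^ 2 : ℝ) : ℂ) * x n) 2 := by
  refine memℓp_of_le (g := x) (C := γ * ‖x‖ ^ 2) (mul_nonneg hγ (by positivity)) fun n => ?_
  rw [norm_mul, Complex.norm_real, Real.norm_eq_abs,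
    abs_of_nonneg (mul_nonneg hγ (by positivity))]
  have h := norm_apply_le x n
  have h1 : ‖x n‖ ^ 2 ≤ ‖x‖ ^ 2 := by nlinarith [norm_nonneg (x n)]
  exact mul_le_mul_of_nonneg_right (mul_le_mul_of_nonneg_left h1 hγ) (norm_nonneg (x n))

/-- The nonlinear part. -/
def NL (hγ : 0 ≤ γ) (x : l2) : l2 := ⟨_, memℓp_N γ hγ x⟩

@[simp] lemma NL_apply (hγ : 0 ≤ γ) (x : l2) (n : ℤ) :
    NL γ hγ x n = ((γ * ‖x n‖ ^ 2 : ℝ) : ℂ) * x n := rfl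

/-- The DNLS vector field. -/
def F (hγ : 0 ≤ γ) (x : l2) : l2 :=
  Complex.I • (shift 1 x + shift (-1) x + NL γ hγ x)

lemma F_apply (hγ : 0 ≤ γ) (x : l2) (n : ℤ) :
    F γ hγ x n = Complex.I * (x (n + 1) + x (n - 1) + ((γ * ‖x n‖ ^ 2 : ℝ) : ℂ) * x n) := by
  have : n + (-1) = n - 1 := by ring
  simp only [F, lp.coeFn_smul, lp.coeFn_add, Pi.smul_apply, Pi.add_apply, shift_apply,
    NL_apply, this, smul_eq_mul]

/-- componentwise DNLS equation for the vector field. -/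
lemma F_eqn (hγ : 0 ≤ γ) (x : l2) (n : ℤ) :
    Complex.I * (F γ hγ x) n + (x (n + 1) + x (n - 1))
      + ((γ * ‖x n‖ ^ 2 : ℝ) : ℂ) * x n = 0 := by
  rw [F_apply]
  ring_nf
  simp [Complex.I_sq]
  ring


variable {γ : ℝ} (hγ : 0 ≤ γ)

lemma norm_NL_sub_le {R : ℝ} (hR : 0 ≤ R) {x y : l2}
    (hx : ‖x‖ ≤ R) (hy : ‖y‖ ≤ R) :
    ‖NL γ hγ x - NL γ hγ y‖ ≤ γ * (3 * R ^ 2) * ‖x - y‖ := by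
  have key : ∀ n, ‖(NL γ hγ x - NL γ hγ y) n‖ ≤ γ * (3 * R ^ 2) * ‖(x - y) n‖ := by
    intro n
    have hc : (NL γ hγ x - NL γ hγ y) n = NL γ hγ x n - NL γ hγ y n := by
      rw [lp.coeFn_sub]; rfl
    have hc2 : (x - y) n = x n - y n := by rw [lp.coeFn_sub]; rfl
    rw [hc, hc2, NL_apply, NL_apply]
    have e : ((γ * ‖x n‖ ^ 2 : ℝ) : ℂ) * x n - ((γ * ‖y n‖ ^ 2 : ℝ) : ℂ) * y n
        = (γ : ℂ) * (((‖x n‖ ^ 2 : ℝ) : ℂ) * x n - ((‖y n‖ ^ 2 : ℝ) : ℂ) * y n) := by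
      push_cast; ring
    rw [e, norm_mul, Complex.norm_real, Real.norm_eq_abs, abs_of_nonneg hγ, mul_assoc]
    refine mul_le_mul_of_nonneg_left ?_ hγ
    exact cubic_diff ((norm_apply_le x n).trans hx) ((norm_apply_le y n).trans hy)
  exact norm_le_of_le (by positivity) key

lemma F_lip_bound {R : ℝ} (hR : 0 ≤ R) {x y : l2}
    (hx : ‖x‖ ≤ R) (hy : ‖y‖ ≤ R) :
    ‖F γ hγ x - F γ hγ y‖ ≤ (2 + 3 * γ * R ^ 2) * ‖x - y‖ := by
  have e : F γ hγ x - F γ hγ y = Complex.I •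
      ((shift 1 x - shift 1 y) + (shift (-1) x - shift (-1) y)
        + (NL γ hγ x - NL γ hγ y)) := by
    rw [F, F, ← smul_sub]
    congr 1
    abel
  rw [e, norm_smul, Complex.norm_I, one_mul]
  calc ‖(shift 1 x - shift 1 y) + (shift (-1) x - shift (-1) y) + (NL γ hγ x - NL γ hγ y)‖
      ≤ ‖shift 1 x - shift 1 y‖ + ‖shift (-1) x - shift (-1) y‖ + ‖NL γ hγ x - NL γ hγ y‖ :=
        norm_add₃_le
    _ ≤ ‖x - y‖ + ‖x - y‖ + γ * (3 * R ^ 2) * ‖x - y‖ := by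
        gcongr
        · exact norm_shift_sub_le 1 x y
        · exact norm_shift_sub_le (-1) x y
        · exact norm_NL_sub_le hγ hR hx hy
    _ = (2 + 3 * γ * R ^ 2) * ‖x - y‖ := by ring

lemma F_lipschitzOnWith {R : ℝ} (hR : 0 ≤ R) :
    LipschitzOnWith (Real.toNNReal (2 + 3 * γ * R ^ 2)) (F γ hγ)
      (Metric.closedBall (0 : l2) R) := by
  rw [lipschitzOnWith_iff_dist_le_mul]
  intro x hx y hy
  rw [dist_eq_norm, dist_eq_norm]
  rw [Metric.mem_closedBall, dist_zero_right] at hx hy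
  have := F_lip_bound hγ hR hx hy
  rwa [Real.coe_toNNReal _ (by positivity)]

lemma norm_NL_le (x : l2) : ‖NL γ hγ x‖ ≤ γ * ‖x‖ ^ 2 * ‖x‖ := by
  refine norm_le_of_le (g := x) (by positivity) fun n => ?_
  rw [NL_apply, norm_mul, Complex.norm_real, Real.norm_eq_abs,
    abs_of_nonneg (mul_nonneg hγ (by positivity))]
  have h := norm_apply_le x n
  have h2 : γ * ‖x n‖ ^ 2 ≤ γ * ‖x‖ ^ 2 :=
    mul_le_mul_of_nonneg_left (by nlinarith [norm_nonneg (x n)]) hγ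
  exact mul_le_mul_of_nonneg_right h2 (norm_nonneg _)

lemma norm_F_le (x : l2) : ‖F γ hγ x‖ ≤ 2 * ‖x‖ + γ * ‖x‖ ^ 3 := by
  rw [F, norm_smul, Complex.norm_I, one_mul]
  calc ‖shift 1 x + shift (-1) x + NL γ hγ x‖
      ≤ ‖shift 1 x‖ + ‖shift (-1) x‖ + ‖NL γ hγ x‖ := norm_add₃_le
    _ ≤ ‖x‖ + ‖x‖ + γ * ‖x‖ ^ 2 * ‖x‖ := by
        gcongr
        · exact norm_shift_le 1 x
        · exact norm_shift_le (-1) x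
        · exact norm_NL_le hγ x
    _ = 2 * ‖x‖ + γ * ‖x‖ ^ 3 := by ring

lemma F_continuous : Continuous (F γ hγ) := by
  rw [continuous_iff_continuousAt]
  intro x
  have h1 : Metric.closedBall (0 : l2) (‖x‖ + 1) ∈ nhds x := by
    refine Metric.closedBall_mem_nhds_of_mem ?_
    rw [Metric.mem_ball, dist_zero_right]
    linarith
  exact (F_lipschitzOnWith hγ (by positivity : (0:ℝ) ≤ ‖x‖ + 1)).continuousOn.continuousAt h1


local notation "⟪" x ", " y "⟫" => @inner ℂ _ _ x y

lemma inner_comp (x y : l2) : ⟪x, y⟫ = ∑' n, (starRingEnd ℂ) (x n) * y n := by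
  rw [lp.inner_eq_tsum]; exact tsum_congr fun n => by rw [RCLike.inner_apply]; ring

lemma inner_NL_symm (x : l2) : ⟪NL γ hγ x, x⟫ = ⟪x, NL γ hγ x⟫ := by
  rw [inner_comp, inner_comp]
  refine tsum_congr fun n => ?_
  rw [NL_apply]
  rw [map_mul, Complex.conj_ofReal]
  ring

lemma inner_shift_symm (x : l2) :
    ⟪shift 1 x, x⟫ = ⟪x, shift (-1) x⟫ := by
  rw [inner_comp, inner_comp]
  simp only [shift_apply]
  calc ∑' n : ℤ, (starRingEnd ℂ) (x (n + 1)) * x n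
      = ∑' n : ℤ, (fun m : ℤ => (starRingEnd ℂ) (x m) * x (m + -1))
          ((Equiv.addRight (1 : ℤ)) n) := by
        refine tsum_congr fun n => ?_
        simp only [Equiv.coe_addRight, add_neg_cancel_right]
    _ = ∑' n : ℤ, (starRingEnd ℂ) (x n) * x (n + -1) :=
        Equiv.tsum_eq (Equiv.addRight (1 : ℤ)) (fun m : ℤ => (starRingEnd ℂ) (x m) * x (m + -1))

lemma inner_shift_symm' (x : l2) :
    ⟪shift (-1) x, x⟫ = ⟪x, shift 1 x⟫ := by
  rw [inner_comp, inner_comp]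
  simp only [shift_apply]
  calc ∑' n : ℤ, (starRingEnd ℂ) (x (n + -1)) * x n
      = ∑' n : ℤ, (fun m : ℤ => (starRingEnd ℂ) (x m) * x (m + 1))
          ((Equiv.addRight (-1 : ℤ)) n) := by
        refine tsum_congr fun n => ?_
        simp only [Equiv.coe_addRight, neg_add_cancel_right]
    _ = ∑' n : ℤ, (starRingEnd ℂ) (x n) * x (n + 1) :=
        Equiv.tsum_eq (Equiv.addRight (-1 : ℤ)) (fun m : ℤ => (starRingEnd ℂ) (x m) * x (m + 1))

lemma re_inner_F (x : l2) : Complex.re ⟪F γ hγ x, x⟫ = 0 := by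
  set w := shift 1 x + shift (-1) x + NL γ hγ x with hw
  have hsymm : ⟪w, x⟫ = ⟪x, w⟫ := by
    rw [hw]
    rw [inner_add_left, inner_add_left, inner_add_right, inner_add_right]
    rw [inner_shift_symm, inner_shift_symm', inner_NL_symm hγ]
    ring
  have him : (⟪w, x⟫).im = 0 := by
    rw [← inner_conj_symm x w] at hsymm
    exact Complex.conj_eq_iff_im.mp hsymm.symm
  have : ⟪F γ hγ x, x⟫ = (starRingEnd ℂ) Complex.I * ⟪w, x⟫ := by
    rw [F, ← hw, inner_smul_left]
  rw [this]
  simp [Complex.ext_iff, him]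


lemma normSq_hasDeriv {f : ℝ → l2} {s : Set ℝ} {t : ℝ}
    (hf : HasDerivWithinAt f (F γ hγ (f t)) s t) :
    HasDerivWithinAt (fun u => Complex.re ⟪f u, f u⟫) 0 s t := by
  have h := hf.inner ℂ hf
  have h2 := Complex.reCLM.hasFDerivAt.comp_hasDerivWithinAt t h
  have hval : Complex.reCLM (⟪f t, F γ hγ (f t)⟫ + ⟪F γ hγ (f t), f t⟫) = 0 := by
    have h3 : Complex.re ⟪f t, F γ hγ (f t)⟫ = Complex.re ⟪F γ hγ (f t), f t⟫ := by
      rw [← inner_conj_symm (f t)]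
      exact (Complex.conj_re _)
    simp only [Complex.reCLM_apply, Complex.add_re, h3, re_inner_F hγ]
    norm_num
  rw [hval] at h2
  exact h2

lemma norm_const_on_Icc {f : ℝ → l2} {a b : ℝ} (hab : a ≤ b)
    (hf : ∀ t ∈ Icc a b, HasDerivWithinAt f (F γ hγ (f t)) (Icc a b) t) :
    ∀ t ∈ Icc a b, ‖f t‖ = ‖f a‖ := by
  rcases eq_or_lt_of_le hab with rfl | hlt
  · intro t ht
    rw [show t = a from le_antisymm ht.2 ht.1]
  · have hderiv : ∀ t ∈ Icc a b,
        HasDerivWithinAt (fun u => Complex.re ⟪f u, f u⟫) 0 (Icc a b) t :=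
      fun t ht => normSq_hasDeriv hγ (hf t ht)
    have hdiff : DifferentiableOn ℝ (fun u => Complex.re ⟪f u, f u⟫) (Icc a b) :=
      fun t ht => ((hderiv t ht).differentiableWithinAt)
    have hzero : ∀ t ∈ Ico a b, derivWithin (fun u => Complex.re ⟪f u, f u⟫) (Icc a b) t = 0 :=
      fun t ht => (hderiv t (Ico_subset_Icc_self ht)).derivWithin
        (uniqueDiffOn_Icc hlt t (Ico_subset_Icc_self ht))
    have hconst := constant_of_derivWithin_zero hdiff hzero
    intro t ht
    have h1 : Complex.re ⟪f t, f t⟫ = Complex.re ⟪f a, f a⟫ := hconst t ht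
    have h2 : ‖f t‖ ^ 2 = ‖f a‖ ^ 2 := by
      rw [← inner_self_eq_norm_sq (𝕜 := ℂ) (f t), ← inner_self_eq_norm_sq (𝕜 := ℂ) (f a)]
      exact h1
    have := congrArg Real.sqrt h2
    rwa [Real.sqrt_sq (norm_nonneg _), Real.sqrt_sq (norm_nonneg _)] at this


variable (γ) (φ₀ : l2)

/-- A bound for `‖F‖` on the ball of radius `‖φ₀‖ + 1`. -/
def Cb : ℝ := 2 * (‖φ₀‖ + 1) + γ * (‖φ₀‖ + 1) ^ 3

/-- The uniform time step. -/
def τ : ℝ := 1 / (Cb γ φ₀ + 1)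

variable {γ}

lemma Cb_nonneg (hγ : 0 ≤ γ) : 0 ≤ Cb γ φ₀ := by
  have := norm_nonneg φ₀
  unfold Cb
  positivity

lemma τ_pos (hγ : 0 ≤ γ) : 0 < τ γ φ₀ := by
  have h := Cb_nonneg φ₀ hγ
  unfold τ
  positivity

/-- One Picard-Lindelöf step of uniform length. -/
lemma step (a : ℝ) (x : l2) (hx : ‖x‖ = ‖φ₀‖) :
    ∃ f : ℝ → l2, f a = x ∧
      (∀ t ∈ Icc a (a + τ γ φ₀), HasDerivWithinAt f (F γ hγ (f t)) (Icc a (a + τ γ φ₀)) t) ∧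
      ∀ t ∈ Icc a (a + τ γ φ₀), ‖f t‖ = ‖φ₀‖ := by
  have hτ := τ_pos φ₀ hγ
  have hCb := Cb_nonneg φ₀ hγ
  have hB : (0:ℝ) ≤ ‖φ₀‖ + 1 := by positivity
  have hpl : IsPicardLindelof (fun _ : ℝ => F γ hγ) (tmin := a) (tmax := a + τ γ φ₀)
      ⟨a, le_refl a, by linarith⟩ x 1 0 (Real.toNNReal (Cb γ φ₀))
      (Real.toNNReal (2 + 3 * γ * (‖φ₀‖ + 1) ^ 2)) := by
    constructor
    · intro t _
      refine (F_lipschitzOnWith hγ hB).mono ?_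
      intro y hy
      rw [Metric.mem_closedBall, dist_zero_right]
      rw [Metric.mem_closedBall, NNReal.coe_one] at hy
      calc ‖y‖ = ‖y - x + x‖ := by simp
        _ ≤ ‖y - x‖ + ‖x‖ := norm_add_le _ _
        _ ≤ 1 + ‖φ₀‖ := by
            rw [hx, ← dist_eq_norm]
            exact add_le_add hy (le_refl _)
        _ = ‖φ₀‖ + 1 := by ring
    · intro y _
      exact continuousOn_const
    · intro t _ y hy
      rw [Metric.mem_closedBall, dist_eq_norm, NNReal.coe_one] at hy
      have hyn : ‖y‖ ≤ ‖φ₀‖ + 1 := by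
        calc ‖y‖ = ‖y - x + x‖ := by simp
          _ ≤ ‖y - x‖ + ‖x‖ := norm_add_le _ _
          _ ≤ 1 + ‖φ₀‖ := by rw [hx]; exact add_le_add hy (le_refl _)
          _ = ‖φ₀‖ + 1 := by ring
      calc ‖F γ hγ y‖ ≤ 2 * ‖y‖ + γ * ‖y‖ ^ 3 := norm_F_le hγ y
        _ ≤ Cb γ φ₀ := by
            unfold Cb
            gcongr <;> first | exact norm_nonneg y | exact hyn | exact hγ
        _ = ((Real.toNNReal (Cb γ φ₀) : NNReal) : ℝ) := (Real.coe_toNNReal _ hCb).symm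
    · show ((Real.toNNReal (Cb γ φ₀) : NNReal) : ℝ) * max (a + τ γ φ₀ - a) (a - a)
          ≤ ((1 : NNReal) : ℝ) - ((0 : NNReal) : ℝ)
      rw [Real.coe_toNNReal _ hCb, NNReal.coe_one, NNReal.coe_zero, sub_zero]
      rw [add_sub_cancel_left, sub_self, max_eq_left hτ.le]
      unfold τ
      rw [mul_one_div]
      rw [div_le_one (by linarith)]
      linarith
  obtain ⟨f, hf0, hf⟩ := hpl.exists_eq_forall_mem_Icc_hasDerivWithinAt₀
  replace hf0 : f a = x := hf0
  refine ⟨f, hf0, hf, ?_⟩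
  intro t ht
  have := norm_const_on_Icc hγ (by linarith : a ≤ a + τ γ φ₀) hf t ht
  rwa [hf0, hx] at this

/-- The property carried along the recursive construction. -/
def SolP (k : ℕ) (f : ℝ → l2) : Prop :=
  (∀ t ∈ Icc ((k : ℝ) * τ γ φ₀) ((k : ℝ) * τ γ φ₀ + τ γ φ₀),
      HasDerivWithinAt f (F γ hγ (f t))
        (Icc ((k : ℝ) * τ γ φ₀) ((k : ℝ) * τ γ φ₀ + τ γ φ₀)) t) ∧
  ∀ t ∈ Icc ((k : ℝ) * τ γ φ₀) ((k : ℝ) * τ γ φ₀ + τ γ φ₀), ‖f t‖ = ‖φ₀‖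

/-- The chosen local solution from one Picard step. -/
noncomputable def stepFun (a : ℝ) (x : l2) (hx : ‖x‖ = ‖φ₀‖) : ℝ → l2 :=
  (step hγ φ₀ a x hx).choose

lemma stepFun_spec (a : ℝ) (x : l2) (hx : ‖x‖ = ‖φ₀‖) :
    stepFun hγ φ₀ a x hx a = x ∧
      (∀ t ∈ Icc a (a + τ γ φ₀), HasDerivWithinAt (stepFun hγ φ₀ a x hx)
        (F γ hγ (stepFun hγ φ₀ a x hx t)) (Icc a (a + τ γ φ₀)) t) ∧
      ∀ t ∈ Icc a (a + τ γ φ₀), ‖stepFun hγ φ₀ a x hx t‖ = ‖φ₀‖ :=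
  (step hγ φ₀ a x hx).choose_spec

/-- The recursively constructed chain of local solutions. -/
noncomputable def sol : (k : ℕ) → {f : ℝ → l2 // SolP hγ φ₀ k f}
  | 0 => ⟨stepFun hγ φ₀ (((0:ℕ) : ℝ) * τ γ φ₀) φ₀ rfl,
      ⟨(stepFun_spec hγ φ₀ _ _ _).2.1, (stepFun_spec hγ φ₀ _ _ _).2.2⟩⟩
  | (k+1) =>
    ⟨stepFun hγ φ₀ (((k+1:ℕ) : ℝ) * τ γ φ₀) ((sol k).1 (((k+1:ℕ) : ℝ) * τ γ φ₀))
        (by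
          have he : (((k+1:ℕ) : ℝ) * τ γ φ₀) = (k : ℝ) * τ γ φ₀ + τ γ φ₀ := by
            push_cast; ring
          rw [he]
          exact (sol k).2.2 _ ⟨by nlinarith [τ_pos φ₀ hγ], le_refl _⟩),
      ⟨(stepFun_spec hγ φ₀ _ _ _).2.1, (stepFun_spec hγ φ₀ _ _ _).2.2⟩⟩

lemma sol_zero : (sol hγ φ₀ 0).1 (((0:ℕ) : ℝ) * τ γ φ₀) = φ₀ := by
  simp only [sol]
  exact (stepFun_spec hγ φ₀ _ _ _).1

lemma sol_succ (k : ℕ) :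
    (sol hγ φ₀ (k+1)).1 (((k+1:ℕ) : ℝ) * τ γ φ₀)
      = (sol hγ φ₀ k).1 (((k+1:ℕ) : ℝ) * τ γ φ₀) := by
  conv_lhs => simp only [sol]
  exact (stepFun_spec hγ φ₀ _ _ _).1


/-- The global solution, glued from the chain of local solutions. -/
noncomputable def Φ (t : ℝ) : l2 := (sol hγ φ₀ ⌊t / τ γ φ₀⌋₊).1 t

include hγ in
lemma floor_eq {k : ℕ} {t : ℝ} (h1 : (k : ℝ) * τ γ φ₀ ≤ t)
    (h2 : t < (k : ℝ) * τ γ φ₀ + τ γ φ₀) : ⌊t / τ γ φ₀⌋₊ = k := by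
  have hτ := τ_pos φ₀ hγ
  have hk1 : (k : ℝ) ≤ t / τ γ φ₀ := (le_div_iff₀ hτ).mpr h1
  have hk2 : t / τ γ φ₀ < (k : ℝ) + 1 := by
    rw [div_lt_iff₀ hτ]
    nlinarith
  have h0 : (0:ℝ) ≤ t / τ γ φ₀ := le_trans (Nat.cast_nonneg k) hk1
  exact (Nat.floor_eq_iff h0).mpr ⟨hk1, hk2⟩

lemma Φ_eqOn (k : ℕ) :
    EqOn (Φ hγ φ₀) (sol hγ φ₀ k).1 (Icc ((k : ℝ) * τ γ φ₀) ((k : ℝ) * τ γ φ₀ + τ γ φ₀)) := by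
  intro t ht
  rcases lt_or_eq_of_le ht.2 with hlt | heq
  · unfold Φ
    rw [floor_eq hγ φ₀ ht.1 hlt]
  · have he : (k : ℝ) * τ γ φ₀ + τ γ φ₀ = ((k+1:ℕ) : ℝ) * τ γ φ₀ := by push_cast; ring
    have hfl : ⌊t / τ γ φ₀⌋₊ = k + 1 := by
      apply floor_eq hγ φ₀
      · rw [← he, ← heq]
      · have hτ := τ_pos φ₀ hγ
        rw [← he, ← heq]
        push_cast
        nlinarith
    unfold Φ
    rw [hfl]
    rw [show t = ((k+1:ℕ) : ℝ) * τ γ φ₀ by rw [← he, heq]]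
    exact sol_succ hγ φ₀ k

lemma Φ_zero : Φ hγ φ₀ 0 = φ₀ := by
  have h := sol_zero hγ φ₀
  unfold Φ
  have : (0:ℝ) / τ γ φ₀ = 0 := zero_div _
  rw [this, Nat.floor_zero]
  simpa using h

lemma Φ_deriv : ∀ t ∈ Ici (0:ℝ), HasDerivWithinAt (Φ hγ φ₀) (F γ hγ (Φ hγ φ₀ t)) (Ici 0) t := by
  intro t ht
  have hτ := τ_pos φ₀ hγ
  set k := ⌊t / τ γ φ₀⌋₊ with hk
  have h0 : (0:ℝ) ≤ t / τ γ φ₀ := div_nonneg ht hτ.le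
  have h1 : (k : ℝ) * τ γ φ₀ ≤ t := (le_div_iff₀ hτ).mp (Nat.floor_le h0)
  have h2 : t < (k : ℝ) * τ γ φ₀ + τ γ φ₀ := by
    have := Nat.lt_floor_add_one (t / τ γ φ₀)
    calc t = (t / τ γ φ₀) * τ γ φ₀ := by field_simp
      _ < ((k : ℝ) + 1) * τ γ φ₀ := by
          apply mul_lt_mul_of_pos_right _ hτ
          exact_mod_cast this
      _ = (k : ℝ) * τ γ φ₀ + τ γ φ₀ := by ring
  have ht' : t ∈ Icc ((k : ℝ) * τ γ φ₀) ((k : ℝ) * τ γ φ₀ + τ γ φ₀) := ⟨h1, h2.le⟩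
  have hval : (sol hγ φ₀ k).1 t = Φ hγ φ₀ t := (Φ_eqOn hγ φ₀ k ht').symm
  have hright : HasDerivWithinAt (Φ hγ φ₀) (F γ hγ (Φ hγ φ₀ t))
      (Icc ((k : ℝ) * τ γ φ₀) ((k : ℝ) * τ γ φ₀ + τ γ φ₀)) t := by
    have h := (sol hγ φ₀ k).2.1 t ht'
    rw [hval] at h
    exact h.congr (fun y hy => Φ_eqOn hγ φ₀ k hy) (Φ_eqOn hγ φ₀ k ht')
  clear hk
  clear_value k
  rcases lt_or_eq_of_le h1 with hlt | heq
  · exact ((hright.hasDerivAt (Icc_mem_nhds hlt h2)).hasDerivWithinAt)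
  · -- t = k * τ
    rcases Nat.eq_zero_or_eq_succ_pred k with hk0 | hksucc
    · -- k = 0, t = 0
      subst hk0
      have h00 : ((0:ℕ) : ℝ) * τ γ φ₀ = 0 := by norm_num
      rw [h00] at heq hright
      rw [zero_add] at hright
      apply hright.mono_of_mem_nhdsWithin
      rw [mem_nhdsWithin]
      exact ⟨Iio (τ γ φ₀), isOpen_Iio, by rw [← heq]; exact hτ,
        fun y hy => ⟨hy.2, hy.1.le⟩⟩
    · obtain ⟨j, rfl⟩ : ∃ j, k = j + 1 := ⟨k - 1, hksucc⟩
      have hjt : (j : ℝ) * τ γ φ₀ + τ γ φ₀ = t := by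
        rw [← heq]; push_cast; ring
      have htj : t ∈ Icc ((j : ℝ) * τ γ φ₀) ((j : ℝ) * τ γ φ₀ + τ γ φ₀) := by
        constructor
        · nlinarith
        · exact hjt.ge
      have hvalj : (sol hγ φ₀ j).1 t = Φ hγ φ₀ t := (Φ_eqOn hγ φ₀ j htj).symm
      have hleft : HasDerivWithinAt (Φ hγ φ₀) (F γ hγ (Φ hγ φ₀ t))
          (Icc ((j : ℝ) * τ γ φ₀) ((j : ℝ) * τ γ φ₀ + τ γ φ₀)) t := by
        have h := (sol hγ φ₀ j).2.1 t htj
        rw [hvalj] at h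
        exact h.congr (fun y hy => Φ_eqOn hγ φ₀ j hy) (Φ_eqOn hγ φ₀ j htj)
      have hunion := hleft.union hright
      apply hunion.mono_of_mem_nhdsWithin
      apply mem_nhdsWithin_of_mem_nhds
      have hopen : Ioo ((j : ℝ) * τ γ φ₀) (((j+1:ℕ) : ℝ) * τ γ φ₀ + τ γ φ₀) ∈ nhds t := by
        apply Ioo_mem_nhds
        · nlinarith
        · exact h2
      apply Filter.mem_of_superset hopen
      intro y hy
      rcases le_or_gt y t with hyt | hyt
      · left
        exact ⟨hy.1.le, by rw [hjt]; exact hyt⟩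
      · right
        exact ⟨heq.le.trans hyt.le, hy.2.le⟩


/-- Any DNLS derivative curve is given by the vector field `F`. -/
lemma deriv_eq_F (hγ : 0 ≤ γ) {x y : l2}
    (h : ∀ n : ℤ, Complex.I * y n + (x (n + 1) + x (n - 1))
      + ((γ * ‖x n‖ ^ 2 : ℝ) : ℂ) * x n = 0) :
    y = F γ hγ x := by
  apply lp.ext
  funext n
  have h2 := F_eqn γ hγ x n
  exact mul_left_cancel₀ Complex.I_ne_zero (by linear_combination (h n) - h2)

/-- Uniqueness of solutions on `[0, ∞)`. -/
lemma unique_aux (hγ : 0 ≤ γ) (φ₁ φ₁' φ₂ φ₂' : ℝ → l2)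
    (h1 : IsDNLSSol γ (Ici 0) φ₁ φ₁') (h2 : IsDNLSSol γ (Ici 0) φ₂ φ₂')
    (h0 : φ₁ 0 = φ₂ 0) : EqOn φ₁ φ₂ (Ici 0) := by
  intro T hT
  have hT0 : (0:ℝ) ≤ T := hT
  obtain ⟨hd1, hc1', he1⟩ := h1
  obtain ⟨hd2, hc2', he2⟩ := h2
  have hc1 : ContinuousOn φ₁ (Icc 0 T) := fun u hu =>
    ((hd1 u hu.1).continuousWithinAt).mono Icc_subset_Ici_self
  have hc2 : ContinuousOn φ₂ (Icc 0 T) := fun u hu =>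
    ((hd2 u hu.1).continuousWithinAt).mono Icc_subset_Ici_self
  obtain ⟨C₁, hC₁⟩ := isCompact_Icc.exists_bound_of_continuousOn hc1
  obtain ⟨C₂, hC₂⟩ := isCompact_Icc.exists_bound_of_continuousOn hc2
  set R' := max C₁ C₂ with hR'def
  have hR' : 0 ≤ R' :=
    le_trans (norm_nonneg (φ₁ 0)) ((hC₁ 0 ⟨le_rfl, hT0⟩).trans (le_max_left _ _))
  have hmem1 : ∀ u ∈ Ico (0:ℝ) T, φ₁ u ∈ Metric.closedBall (0 : l2) R' := by
    intro u hu
    rw [Metric.mem_closedBall, dist_zero_right]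
    exact (hC₁ u (Ico_subset_Icc_self hu)).trans (le_max_left _ _)
  have hmem2 : ∀ u ∈ Ico (0:ℝ) T, φ₂ u ∈ Metric.closedBall (0 : l2) R' := by
    intro u hu
    rw [Metric.mem_closedBall, dist_zero_right]
    exact (hC₂ u (Ico_subset_Icc_self hu)).trans (le_max_right _ _)
  have hder1 : ∀ u ∈ Ico (0:ℝ) T,
      HasDerivWithinAt φ₁ ((fun _ : ℝ => F γ hγ) u (φ₁ u)) (Ici u) u := by
    intro u hu
    have he : φ₁' u = F γ hγ (φ₁ u) := deriv_eq_F hγ (he1 u hu.1)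
    exact (he ▸ hd1 u hu.1).mono (Ici_subset_Ici.mpr hu.1)
  have hder2 : ∀ u ∈ Ico (0:ℝ) T,
      HasDerivWithinAt φ₂ ((fun _ : ℝ => F γ hγ) u (φ₂ u)) (Ici u) u := by
    intro u hu
    have he : φ₂' u = F γ hγ (φ₂ u) := deriv_eq_F hγ (he2 u hu.1)
    exact (he ▸ hd2 u hu.1).mono (Ici_subset_Ici.mpr hu.1)
  have key := ODE_solution_unique_of_mem_Icc_right
    (v := fun _ : ℝ => F γ hγ) (s := fun _ : ℝ => Metric.closedBall (0 : l2) R')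
    (K := Real.toNNReal (2 + 3 * γ * R' ^ 2))
    (fun _ _ => F_lipschitzOnWith hγ hR') hc1 hder1 hmem1 hc2 hder2 hmem2 h0
  exact key ⟨hT0, le_rfl⟩

end DNLSaux

/-- Global existence and uniqueness for the cubic DNLS: for every `φ₀ ∈ ℓ²` there is
exactly one continuously differentiable curve `φ : [0,∞) → ℓ²` with `φ(0) = φ₀` solving
the DNLS equation componentwise. -/
theorem DNLS_global_existence_uniqueness (γ : ℝ) (hγ : 0 < γ) (φ₀ : l2) :
    (∃ φ φ' : ℝ → l2, φ 0 = φ₀ ∧ IsDNLSSol γ (Ici 0) φ φ') ∧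
      (∀ φ₁ φ₁' φ₂ φ₂' : ℝ → l2,
        φ₁ 0 = φ₀ → IsDNLSSol γ (Ici 0) φ₁ φ₁' →
        φ₂ 0 = φ₀ → IsDNLSSol γ (Ici 0) φ₂ φ₂' →
        EqOn φ₁ φ₂ (Ici 0)) := by
  have hγ' : 0 ≤ γ := hγ.le
  constructor
  · refine ⟨DNLSaux.Φ hγ' φ₀, fun t => DNLSaux.F γ hγ' (DNLSaux.Φ hγ' φ₀ t),
      DNLSaux.Φ_zero hγ' φ₀, ?_, ?_, ?_⟩
    · exact DNLSaux.Φ_deriv hγ' φ₀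
    · exact (DNLSaux.F_continuous hγ').comp_continuousOn
        (fun t ht => (DNLSaux.Φ_deriv hγ' φ₀ t ht).continuousWithinAt)
    · intro t ht n
      exact DNLSaux.F_eqn γ hγ' (DNLSaux.Φ hγ' φ₀ t) n
  · intro φ₁ φ₁' φ₂ φ₂' h10 h1 h20 h2
    exact DNLSaux.unique_aux hγ' φ₁ φ₁' φ₂ φ₂' h1 h2 (by rw [h10, h20])
end
end
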